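/- Let d ≥ 1, let ν ∈ ℝ^d be a unit vector, and let A be a real d×d matrix. Then −∫_{ℝ^d} ∇G_1(z)·(A z)·max(ν·z, 0) dz = c₀·( ν·(A ν) + tr A ), where c₀ = 1/√(2π) and ∇G_1(z) = −z·G_1(z) is the gradient of the standard Gaussian density G_1(z) = (2π)^{−d/2} exp(−|z|²/2). -/

import Mathlib

open MeasureTheory

/-- The standard Gaussian density `G_1(z) = (2π)^{-d/2} exp(-|z|²/2)` on `ℝ^d`. -/
noncomputable def stdGauss (d : ℕ) (z : EuclideanSpace ℝ (Fin d)) : ℝ :=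
  (2 * Real.pi) ^ (-(d : ℝ) / 2) * Real.exp (-‖z‖ ^ 2 / 2)

open Real Set Filter

noncomputable def c1 : ℝ := (Real.sqrt (2 * Real.pi))⁻¹

lemma integrable_pow_gauss (n : ℕ) :
    Integrable fun t : ℝ => t ^ n * Real.exp (-t ^ 2 / 2) := by
  have h := integrable_rpow_mul_exp_neg_mul_sq (by norm_num : (0:ℝ) < 1/2)
    (s := n) (by have : (0:ℝ) ≤ n := Nat.cast_nonneg n; linarith)
  have e : (fun t : ℝ => t ^ n * Real.exp (-t ^ 2 / 2))
      = fun x : ℝ => x ^ (n : ℝ) * Real.exp (-(1/2) * x ^ 2) := by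
    funext t; rw [Real.rpow_natCast]; congr 1; ring
  rw [e]; exact h

lemma integrable_pow_max_gauss (n : ℕ) :
    Integrable fun t : ℝ => t ^ n * max t 0 * Real.exp (-t ^ 2 / 2) := by
  refine Integrable.mono' (integrable_pow_gauss (n+1)).abs ?_ ?_
  · apply Continuous.aestronglyMeasurable
    exact ((continuous_pow n).mul (continuous_id.max continuous_const)).mul
      (Real.continuous_exp.comp (by continuity))
  · filter_upwards with t
    have h1 : max t 0 ≤ |t| := max_le (le_abs_self t) (abs_nonneg t)
    have h2 : (0:ℝ) ≤ max t 0 := le_max_right t 0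
    rw [Real.norm_eq_abs]
    calc |t ^ n * max t 0 * Real.exp (-t ^ 2 / 2)|
        = |t| ^ n * max t 0 * Real.exp (-t ^ 2 / 2) := by
          rw [abs_mul, abs_mul, abs_pow, abs_of_nonneg h2,
            abs_of_nonneg (Real.exp_pos _).le]
      _ ≤ |t| ^ n * |t| * Real.exp (-t ^ 2 / 2) := by gcongr
      _ = |t ^ (n+1) * Real.exp (-t ^ 2 / 2)| := by
          rw [abs_mul, abs_pow, abs_of_nonneg (Real.exp_pos _).le]; ring

lemma gauss_integral : ∫ t : ℝ, Real.exp (-t ^ 2 / 2) = Real.sqrt (2 * Real.pi) := by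
  have h := integral_gaussian (1/2)
  have e : (fun t : ℝ => Real.exp (-(1/2) * t ^ 2)) = fun t => Real.exp (-t ^ 2 / 2) := by
    funext t; congr 1; ring
  rw [e] at h; rw [h]; congr 1; ring

lemma gauss_integral_Ioi : ∫ t in Ioi (0:ℝ), Real.exp (-t ^ 2 / 2)
    = Real.sqrt (2 * Real.pi) / 2 := by
  have h := integral_gaussian_Ioi (1/2)
  have e : (fun t : ℝ => Real.exp (-(1/2) * t ^ 2)) = fun t => Real.exp (-t ^ 2 / 2) := by
    funext t; congr 1; ring
  rw [e] at h; rw [h]; congr 2; ring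

lemma tendsto_pow_gauss (n : ℕ) :
    Tendsto (fun t : ℝ => t ^ n * Real.exp (-t ^ 2 / 2)) atTop (nhds 0) := by
  have h := rpow_mul_exp_neg_mul_sq_isLittleO_exp_neg (by norm_num : (0:ℝ) < 1/2) (n : ℝ)
  have e : (fun x : ℝ => x ^ (n:ℝ) * Real.exp (-(1/2) * x ^ 2))
      = fun t : ℝ => t ^ n * Real.exp (-t ^ 2 / 2) := by
    funext t; rw [Real.rpow_natCast]; congr 1; ring
  rw [e] at h
  refine h.trans_tendsto ?_
  have : Tendsto (fun t : ℝ => -(1/2) * t) atTop atBot := by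
    apply Tendsto.const_mul_atTop_of_neg (by norm_num) tendsto_id
  exact Real.tendsto_exp_atBot.comp this

lemma integrable_exp_gauss : Integrable fun t : ℝ => Real.exp (-t ^ 2 / 2) := by
  have := integrable_pow_gauss 0
  simpa using this

lemma integrable_mul_gauss : Integrable fun t : ℝ => t * Real.exp (-t ^ 2 / 2) := by
  have := integrable_pow_gauss 1
  simpa using this

lemma hasDerivAt_gauss (x : ℝ) :
    HasDerivAt (fun t : ℝ => Real.exp (-t ^ 2 / 2)) (-x * Real.exp (-x ^ 2 / 2)) x := by
  have h1 : HasDerivAt (fun t : ℝ => -t ^ 2 / 2) (-x) x := by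
    have := (hasDerivAt_pow 2 x).neg.div_const 2
    refine this.congr_deriv ?_
    norm_num
    ring
  have := h1.exp
  convert this using 1
  ring

lemma gauss_moment1_Ioi : ∫ t in Ioi (0:ℝ), t * Real.exp (-t ^ 2 / 2) = 1 := by
  have hd : ∀ x ∈ Ici (0:ℝ), HasDerivAt (fun t : ℝ => -Real.exp (-t ^ 2 / 2))
      (x * Real.exp (-x ^ 2 / 2)) x := by
    intro x _
    have := (hasDerivAt_gauss x).neg
    refine this.congr_deriv ?_
    ring
  have hi : IntegrableOn (fun t : ℝ => t * Real.exp (-t ^ 2 / 2)) (Ioi 0) :=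
    integrable_mul_gauss.integrableOn
  have ht : Tendsto (fun t : ℝ => -Real.exp (-t ^ 2 / 2)) atTop (nhds 0) := by
    have := (tendsto_pow_gauss 0).neg
    simpa using this
  have h := integral_Ioi_of_hasDerivAt_of_tendsto' hd hi ht
  simpa using h

lemma gauss_moment3_Ioi : ∫ t in Ioi (0:ℝ), t ^ 3 * Real.exp (-t ^ 2 / 2) = 2 := by
  have hd : ∀ x ∈ Ici (0:ℝ), HasDerivAt (fun t : ℝ => -((t ^ 2 + 2) * Real.exp (-t ^ 2 / 2)))
      (x ^ 3 * Real.exp (-x ^ 2 / 2)) x := by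
    intro x _
    have h1 : HasDerivAt (fun t : ℝ => t ^ 2 + 2) (2 * x) x := by
      simpa using (hasDerivAt_pow 2 x).add_const 2
    have := (h1.mul (hasDerivAt_gauss x)).neg
    refine this.congr_deriv ?_
    ring
  have hi : IntegrableOn (fun t : ℝ => t ^ 3 * Real.exp (-t ^ 2 / 2)) (Ioi 0) :=
    (integrable_pow_gauss 3).integrableOn
  have ht : Tendsto (fun t : ℝ => -((t ^ 2 + 2) * Real.exp (-t ^ 2 / 2))) atTop (nhds 0) := by
    have := ((tendsto_pow_gauss 2).add ((tendsto_pow_gauss 0).const_mul 2)).neg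
    simp only [neg_zero, add_zero, mul_zero] at this
    refine Tendsto.congr (fun t => by ring) this
  have h := integral_Ioi_of_hasDerivAt_of_tendsto' hd hi ht
  norm_num at h
  exact h
lemma gauss_moment2_Ioi : ∫ t in Ioi (0:ℝ), t ^ 2 * Real.exp (-t ^ 2 / 2)
    = Real.sqrt (2 * Real.pi) / 2 := by
  have hd : ∀ x ∈ Ici (0:ℝ), HasDerivAt (fun t : ℝ => -(t * Real.exp (-t ^ 2 / 2)))
      (x ^ 2 * Real.exp (-x ^ 2 / 2) - Real.exp (-x ^ 2 / 2)) x := by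
    intro x _
    have := ((hasDerivAt_id x).mul (hasDerivAt_gauss x)).neg
    refine this.congr_deriv ?_
    simp only [id]
    ring
  have hi : IntegrableOn
      (fun t : ℝ => t ^ 2 * Real.exp (-t ^ 2 / 2) - Real.exp (-t ^ 2 / 2)) (Ioi 0) :=
    ((integrable_pow_gauss 2).sub integrable_exp_gauss).integrableOn
  have ht : Tendsto (fun t : ℝ => -(t * Real.exp (-t ^ 2 / 2))) atTop (nhds 0) := by
    have := (tendsto_pow_gauss 1).neg
    simpa using this
  have h := integral_Ioi_of_hasDerivAt_of_tendsto' hd hi ht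
  simp only [neg_zero, zero_mul, Real.exp_zero, mul_one, sub_zero, neg_neg, mul_zero] at h
  have hsub : ∫ t in Ioi (0:ℝ), (t ^ 2 * Real.exp (-t ^ 2 / 2) - Real.exp (-t ^ 2 / 2))
      = (∫ t in Ioi (0:ℝ), t ^ 2 * Real.exp (-t ^ 2 / 2))
        - ∫ t in Ioi (0:ℝ), Real.exp (-t ^ 2 / 2) :=
    integral_sub ((integrable_pow_gauss 2).integrableOn) integrable_exp_gauss.integrableOn
  rw [hsub, gauss_integral_Ioi] at h
  linarith

lemma gauss_moment2 : ∫ t : ℝ, t ^ 2 * Real.exp (-t ^ 2 / 2) = Real.sqrt (2 * Real.pi) := by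
  have h : (fun t : ℝ => t ^ 2 * Real.exp (-t ^ 2 / 2))
      = fun t : ℝ => (fun s : ℝ => s ^ 2 * Real.exp (-s ^ 2 / 2)) |t| := by
    funext t; simp [sq_abs]
  rw [h, integral_comp_abs (f := fun s : ℝ => s ^ 2 * Real.exp (-s ^ 2 / 2)),
    gauss_moment2_Ioi]
  ring

lemma gauss_moment1 : ∫ t : ℝ, t * Real.exp (-t ^ 2 / 2) = 0 := by
  have hmp := (Measure.measurePreserving_neg (volume : Measure ℝ))
  have h := hmp.integral_comp (Homeomorph.neg ℝ).measurableEmbedding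
    (fun t : ℝ => t * Real.exp (-t ^ 2 / 2))
  have he : ∀ t : ℝ, (Homeomorph.neg ℝ) t = -t := fun _ => rfl
  have h2 : ∫ t : ℝ, -t * Real.exp (-(-t) ^ 2 / 2)
      = -∫ t : ℝ, t * Real.exp (-t ^ 2 / 2) := by
    rw [← integral_neg]
    congr 1; funext t; ring_nf
  rw [h2] at h
  linarith

lemma sqrt_two_pi_pos : 0 < Real.sqrt (2 * Real.pi) :=
  Real.sqrt_pos.2 (by positivity)

lemma gauss_max_integral (n : ℕ) :
    ∫ t : ℝ, t ^ n * max t 0 * Real.exp (-t ^ 2 / 2)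
      = ∫ t in Ioi (0:ℝ), t ^ (n+1) * Real.exp (-t ^ 2 / 2) := by
  have h := (integral_add_compl (measurableSet_Iic (a := (0:ℝ)))
    (integrable_pow_max_gauss n)).symm
  rw [compl_Iic] at h
  have h1 : ∫ t in Iic (0:ℝ), t ^ n * max t 0 * Real.exp (-t ^ 2 / 2) = 0 := by
    rw [setIntegral_congr_fun measurableSet_Iic
      (g := fun _ => (0:ℝ)) (fun x hx => by
        simp only [max_eq_right (mem_Iic.1 hx)]
        ring)]
    simp
  have h2 : ∫ t in Ioi (0:ℝ), t ^ n * max t 0 * Real.exp (-t ^ 2 / 2)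
      = ∫ t in Ioi (0:ℝ), t ^ (n+1) * Real.exp (-t ^ 2 / 2) := by
    refine setIntegral_congr_fun measurableSet_Ioi (fun x hx => ?_)
    rw [max_eq_left (le_of_lt (mem_Ioi.1 hx)), pow_succ]
    ring
  rw [h, h1, h2, zero_add]

lemma ival_1 : ∫ t : ℝ, c1 * Real.exp (-t ^ 2 / 2) = 1 := by
  rw [integral_const_mul, gauss_integral, c1, inv_mul_cancel₀ sqrt_two_pi_pos.ne']

lemma ival_t : ∫ t : ℝ, t * (c1 * Real.exp (-t ^ 2 / 2)) = 0 := by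
  rw [show (fun t : ℝ => t * (c1 * Real.exp (-t ^ 2 / 2)))
      = fun t : ℝ => c1 * (t * Real.exp (-t ^ 2 / 2)) from funext fun t => by ring]
  rw [integral_const_mul, gauss_moment1, mul_zero]

lemma ival_tt : ∫ t : ℝ, t * t * (c1 * Real.exp (-t ^ 2 / 2)) = 1 := by
  rw [show (fun t : ℝ => t * t * (c1 * Real.exp (-t ^ 2 / 2)))
      = fun t : ℝ => c1 * (t ^ 2 * Real.exp (-t ^ 2 / 2)) from funext fun t => by ring]
  rw [integral_const_mul, gauss_moment2, c1, inv_mul_cancel₀ sqrt_two_pi_pos.ne']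

lemma ival_max : ∫ t : ℝ, max t 0 * (c1 * Real.exp (-t ^ 2 / 2)) = c1 := by
  rw [show (fun t : ℝ => max t 0 * (c1 * Real.exp (-t ^ 2 / 2)))
      = fun t : ℝ => c1 * (t ^ 0 * max t 0 * Real.exp (-t ^ 2 / 2)) from
      funext fun t => by rw [pow_zero]; ring]
  rw [integral_const_mul, gauss_max_integral 0]
  norm_num [gauss_moment1_Ioi]

lemma ival_ttmax : ∫ t : ℝ, t * t * max t 0 * (c1 * Real.exp (-t ^ 2 / 2)) = 2 * c1 := by
  rw [show (fun t : ℝ => t * t * max t 0 * (c1 * Real.exp (-t ^ 2 / 2)))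
      = fun t : ℝ => c1 * (t ^ 2 * max t 0 * Real.exp (-t ^ 2 / 2)) from
      funext fun t => by ring]
  rw [integral_const_mul, gauss_max_integral 2]
  norm_num [gauss_moment3_Ioi]
  ring

lemma integrable_aux1 (n : ℕ) :
    Integrable fun t : ℝ => c1 * (t ^ n * Real.exp (-t ^ 2 / 2)) :=
  (integrable_pow_gauss n).const_mul c1

lemma integrable_aux2 (n : ℕ) :
    Integrable fun t : ℝ => c1 * (t ^ n * max t 0 * Real.exp (-t ^ 2 / 2)) :=
  (integrable_pow_max_gauss n).const_mul c1

lemma g_integrable {ι : Type*} [DecidableEq ι] (k l m i : ι) :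
    Integrable fun t : ℝ => (if i = k then t else 1) * (if i = l then t else 1) *
      (if i = m then max t 0 else 1) * (c1 * Real.exp (-t ^ 2 / 2)) := by
  rcases eq_or_ne i k with hk | hk <;> rcases eq_or_ne i l with hl | hl <;>
      rcases eq_or_ne i m with hm | hm
  · exact (integrable_aux2 2).congr (Filter.Eventually.of_forall fun t => by
      simp only [if_pos hk, if_pos hl, if_pos hm]; ring)
  · exact (integrable_aux1 2).congr (Filter.Eventually.of_forall fun t => by
      simp only [if_pos hk, if_pos hl, if_neg hm]; ring)
  · exact (integrable_aux2 1).congr (Filter.Eventually.of_forall fun t => by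
      simp only [if_pos hk, if_neg hl, if_pos hm]; ring)
  · exact (integrable_aux1 1).congr (Filter.Eventually.of_forall fun t => by
      simp only [if_pos hk, if_neg hl, if_neg hm]; ring)
  · exact (integrable_aux2 1).congr (Filter.Eventually.of_forall fun t => by
      simp only [if_neg hk, if_pos hl, if_pos hm]; ring)
  · exact (integrable_aux1 1).congr (Filter.Eventually.of_forall fun t => by
      simp only [if_neg hk, if_pos hl, if_neg hm]; ring)
  · exact (integrable_aux2 0).congr (Filter.Eventually.of_forall fun t => by
      simp only [if_neg hk, if_neg hl, if_pos hm]; ring)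
  · exact (integrable_aux1 0).congr (Filter.Eventually.of_forall fun t => by
      simp only [if_neg hk, if_neg hl, if_neg hm]; ring)

lemma term_integral {ι : Type*} [Fintype ι] [DecidableEq ι] (k l m : ι) :
    (∫ x : ι → ℝ, ∏ i, ((if i = k then x i else 1) * (if i = l then x i else 1) *
      (if i = m then max (x i) 0 else 1) * (c1 * Real.exp (-(x i) ^ 2 / 2))))
    = if k = l then (if k = m then 2 * c1 else c1) else 0 := by
  rw [MeasureTheory.integral_fintype_prod_volume_eq_prod
    (fun i t => (if i = k then t else 1) * (if i = l then t else 1) *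
      (if i = m then max t 0 else 1) * (c1 * Real.exp (-t ^ 2 / 2)))]
  by_cases hkl : k = l
  · subst hkl
    by_cases hkm : k = m
    · subst hkm
      rw [if_pos rfl, if_pos rfl]
      rw [Finset.prod_eq_single k (fun i _ hi => by
        simp only [if_neg hi, one_mul]; exact ival_1)
        (fun h => absurd (Finset.mem_univ k) h)]
      simp only [if_pos rfl]
      exact ival_ttmax
    · rw [if_pos rfl, if_neg hkm]
      rw [Finset.prod_eq_single m (fun i _ him => by
        rcases eq_or_ne i k with hik | hik
        · simp only [if_pos hik, if_neg him, mul_one]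
          exact ival_tt
        · simp only [if_neg hik, if_neg him, one_mul, mul_one]
          exact ival_1)
        (fun h => absurd (Finset.mem_univ m) h)]
      have h1 : m ≠ k := fun h => hkm h.symm
      simp only [if_neg h1, if_pos rfl, one_mul]
      exact ival_max
  · rw [if_neg hkl]
    rcases eq_or_ne k m with hkm | hkm
    · refine Finset.prod_eq_zero (Finset.mem_univ l) ?_
      have h1 : l ≠ k := fun h => hkl h.symm
      have h2 : l ≠ m := by rw [← hkm]; exact h1
      simp only [if_neg h1, if_pos rfl, if_neg h2, one_mul, mul_one]
      exact ival_t
    · refine Finset.prod_eq_zero (Finset.mem_univ k) ?_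
      simp only [if_pos rfl, if_neg hkl, if_neg hkm, one_mul, mul_one]
      exact ival_t

lemma sum_apply_E {d : ℕ} (s : Finset (Fin d)) (v : Fin d → EuclideanSpace ℝ (Fin d))
    (i : Fin d) : (∑ k ∈ s, v k) i = ∑ k ∈ s, v k i := by
  classical
  induction s using Finset.induction with
  | empty => rfl
  | insert _ _ h ih => rw [Finset.sum_insert h, Finset.sum_insert h, ← ih]; rfl

lemma sum_swap3 {ι : Type*} [Fintype ι] (f : ι → ι → ι → ℝ) :
    ∑ i, ∑ j, ∑ l, f i j l = ∑ l, ∑ i, ∑ j, f i j l := by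
  calc ∑ i, ∑ j, ∑ l, f i j l = ∑ i, ∑ l, ∑ j, f i j l :=
        Finset.sum_congr rfl fun i _ => Finset.sum_comm
    _ = ∑ l, ∑ i, ∑ j, f i j l := Finset.sum_comm

lemma quad_expand {ι : Type*} [Fintype ι] (A : ι → ι → ℝ) (u : ι → ι → ℝ) (w : ι → ℝ) :
    ∑ i, (∑ k, w k * u k i) * (∑ j, A i j * ∑ l, w l * u l j)
    = ∑ k, ∑ l, (∑ i, ∑ j, u k i * (A i j * u l j)) * (w k * w l) := by
  simp_rw [Finset.sum_mul, Finset.mul_sum]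
  rw [Finset.sum_comm]
  refine Finset.sum_congr rfl fun k _ => ?_
  rw [sum_swap3]
  refine Finset.sum_congr rfl fun l _ => Finset.sum_congr rfl fun i _ =>
    Finset.sum_congr rfl fun j _ => by ring

lemma c1_pow (d : ℕ) : c1 ^ d = (2 * Real.pi) ^ (-(d : ℝ) / 2) := by
  have h2π : (0:ℝ) ≤ 2 * Real.pi := by positivity
  rw [c1, Real.sqrt_eq_rpow, ← Real.rpow_neg h2π, ← Real.rpow_natCast
    ((2 * Real.pi) ^ (-(1/2 : ℝ))) d, ← Real.rpow_mul h2π]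
  congr 1
  ring

theorem stmt_18 (d : ℕ) (hd : 1 ≤ d) (ν : EuclideanSpace ℝ (Fin d)) (hν : ‖ν‖ = 1)
    (A : Matrix (Fin d) (Fin d) ℝ) :
    -∫ z : EuclideanSpace ℝ (Fin d),
        (dotProduct (fun i => -(z i) * stdGauss d z) (A.mulVec fun i => z i)) *
          max (dotProduct (fun i => ν i) fun i => z i) 0
      = (1 / Real.sqrt (2 * Real.pi)) *
          ((dotProduct (fun i => ν i) (A.mulVec fun i => ν i)) + A.trace) := by
  classical
  set i0 : Fin d := ⟨0, hd⟩ with hi0def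
  -- orthonormal basis extending ν
  obtain ⟨b, hb⟩ : ∃ b : OrthonormalBasis (Fin d) ℝ (EuclideanSpace ℝ (Fin d)), b i0 = ν := by
    have hcard : Module.finrank ℝ (EuclideanSpace ℝ (Fin d)) = Fintype.card (Fin d) := by
      simp [finrank_euclideanSpace]
    have horth : Orthonormal ℝ (({i0} : Set (Fin d)).restrict (fun _ : Fin d => ν)) := by
      constructor
      · intro i
        exact hν
      · intro i j hij
        exact absurd (Subtype.ext ((Set.mem_singleton_iff.mp i.2).trans
          (Set.mem_singleton_iff.mp j.2).symm)) hij
    obtain ⟨b, hbs⟩ := horth.exists_orthonormalBasis_extension_of_card_eq hcard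
    exact ⟨b, hbs i0 rfl⟩
  set B : Fin d → Fin d → ℝ := fun k l => ∑ i, ∑ j, b k i * (A i j * b l j) with hBdef
  set F : EuclideanSpace ℝ (Fin d) → ℝ := fun z =>
    (∑ i, z i * (A.mulVec fun j => z j) i) * max (∑ i, ν i * z i) 0 * stdGauss d z with hFdef
  -- Step 1
  have step1 : -∫ z : EuclideanSpace ℝ (Fin d),
      (dotProduct (fun i => -(z i) * stdGauss d z) (A.mulVec fun i => z i)) *
        max (dotProduct (fun i => ν i) fun i => z i) 0
      = ∫ z, F z := by
    rw [← integral_neg]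
    congr 1
    funext z
    simp only [dotProduct, hFdef]
    have hsum : ∑ i, (-(z i) * stdGauss d z) * (A.mulVec fun i => z i) i
        = -((∑ i, z i * (A.mulVec fun i => z i) i) * stdGauss d z) := by
      rw [Finset.sum_mul, ← Finset.sum_neg_distrib]
      exact Finset.sum_congr rfl fun i _ => by ring
    rw [hsum]
    ring
  -- Step 2 : change of variables
  have step2 : ∫ w : EuclideanSpace ℝ (Fin d), F (b.repr.symm w) = ∫ z, F z :=
    (b.measurePreserving_repr_symm).integral_comp
      (b.repr.symm.toHomeomorph.measurableEmbedding) F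
  -- coordinates
  have hz : ∀ (w : EuclideanSpace ℝ (Fin d)) (i : Fin d),
      (b.repr.symm w) i = ∑ k, w k * b k i := by
    intro w i
    rw [← b.sum_repr_symm w, sum_apply_E]
    exact Finset.sum_congr rfl fun k _ => by
      simp [PiLp.smul_apply, smul_eq_mul]
  have hinner : ∀ w : EuclideanSpace ℝ (Fin d),
      ∑ i, ν i * (b.repr.symm w) i = w i0 := by
    intro w
    have h1 : (inner ℝ ν (b.repr.symm w) : ℝ) = ∑ i, ν i * (b.repr.symm w) i := by
      rw [PiLp.inner_apply]
      simp [mul_comm]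
    have h2 : (inner ℝ (b i0) (b.repr.symm w) : ℝ) = w i0 := by
      rw [← b.repr_apply_apply]
      simp
    rw [← h1, ← hb]
    exact h2
  -- Step 3 : pointwise form after rotation
  have step3 : ∀ w : EuclideanSpace ℝ (Fin d), F (b.repr.symm w)
      = (∑ k, ∑ l, B k l * (w k * w l)) * max (w i0) 0 * stdGauss d w := by
    intro w
    have hq : ∑ i, (b.repr.symm w) i * ((A.mulVec fun j => (b.repr.symm w) j) i)
        = ∑ k, ∑ l, B k l * (w k * w l) := by
      simp only [Matrix.mulVec, dotProduct, hz]
      exact quad_expand (fun i j => A i j) (fun k i => b k i) w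
    have hnorm : stdGauss d (b.repr.symm w) = stdGauss d w := by
      simp only [stdGauss, LinearIsometryEquiv.norm_map]
    simp only [hFdef]
    rw [hq, hinner w, hnorm]
  have step4 : ∫ w : EuclideanSpace ℝ (Fin d), F (b.repr.symm w)
      = ∫ w : EuclideanSpace ℝ (Fin d),
        (∑ k, ∑ l, B k l * (w k * w l)) * max (w i0) 0 * stdGauss d w :=
    integral_congr_ae (Filter.Eventually.of_forall step3)
  have step5 : ∫ w : EuclideanSpace ℝ (Fin d),
      (∑ k, ∑ l, B k l * (w k * w l)) * max (w i0) 0 * stdGauss d w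
      = ∫ x : Fin d → ℝ, ∑ k, ∑ l, B k l *
        ∏ i, ((if i = k then x i else 1) * (if i = l then x i else 1) *
          (if i = i0 then max (x i) 0 else 1) * (c1 * Real.exp (-(x i) ^ 2 / 2))) := by
    rw [← ((EuclideanSpace.volume_preserving_symm_measurableEquiv_toLp (Fin d)).symm).integral_comp'
      (fun w : EuclideanSpace ℝ (Fin d) =>
        (∑ k, ∑ l, B k l * (w k * w l)) * max (w i0) 0 * stdGauss d w)]
    refine integral_congr_ae (Filter.Eventually.of_forall fun x => ?_)
    have hcoord : ∀ i, ((MeasurableEquiv.toLp 2 (Fin d → ℝ)).symm.symm x) i = x i :=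
      fun _ => rfl
    have hnorm2 : ‖(MeasurableEquiv.toLp 2 (Fin d → ℝ)).symm.symm x‖ ^ 2 = ∑ i, x i ^ 2 := by
      rw [EuclideanSpace.norm_eq, Real.sq_sqrt (by positivity)]
      exact Finset.sum_congr rfl fun i _ => by rw [hcoord, Real.norm_eq_abs, sq_abs]
    have hG : stdGauss d ((MeasurableEquiv.toLp 2 (Fin d → ℝ)).symm.symm x)
        = c1 ^ d * Real.exp (-(∑ i, x i ^ 2) / 2) := by
      simp only [stdGauss]
      rw [hnorm2, c1_pow]
    have hsumdiv : ∑ i, -(x i) ^ 2 / 2 = -(∑ i, x i ^ 2) / 2 := by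
      rw [← Finset.sum_div, ← Finset.sum_neg_distrib]
    have hprod : ∀ k l : Fin d,
        (∏ i, ((if i = k then x i else 1) * (if i = l then x i else 1) *
          (if i = i0 then max (x i) 0 else 1) * (c1 * Real.exp (-(x i) ^ 2 / 2))))
        = x k * x l * max (x i0) 0 * (c1 ^ d * Real.exp (-(∑ i, x i ^ 2) / 2)) := by
      intro k l
      rw [Finset.prod_mul_distrib, Finset.prod_mul_distrib, Finset.prod_mul_distrib,
        Finset.prod_mul_distrib,
        Finset.prod_ite_eq' Finset.univ k (fun i => x i),
        Finset.prod_ite_eq' Finset.univ l (fun i => x i),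
        Finset.prod_ite_eq' Finset.univ i0 (fun i => max (x i) 0),
        Finset.prod_const, Finset.card_univ, Fintype.card_fin,
        ← Real.exp_sum, hsumdiv]
      simp only [Finset.mem_univ, if_true]
    simp only [hcoord, hG, hprod]
    rw [Finset.sum_mul, Finset.sum_mul]
    refine Finset.sum_congr rfl fun k _ => ?_
    rw [Finset.sum_mul, Finset.sum_mul]
    exact Finset.sum_congr rfl fun l _ => by ring
  have hint : ∀ k l : Fin d, Integrable (fun x : Fin d → ℝ =>
      B k l * ∏ i, ((if i = k then x i else 1) * (if i = l then x i else 1) *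
        (if i = i0 then max (x i) 0 else 1) * (c1 * Real.exp (-(x i) ^ 2 / 2)))) := by
    intro k l
    exact (Integrable.fintype_prod (f := fun (i : Fin d) (t : ℝ) =>
      (if i = k then t else 1) * (if i = l then t else 1) *
        (if i = i0 then max t 0 else 1) * (c1 * Real.exp (-t ^ 2 / 2)))
      (fun i => g_integrable k l i0 i)).const_mul _
  have step6 : (∫ x : Fin d → ℝ, ∑ k, ∑ l, B k l *
        ∏ i, ((if i = k then x i else 1) * (if i = l then x i else 1) *
          (if i = i0 then max (x i) 0 else 1) * (c1 * Real.exp (-(x i) ^ 2 / 2))))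
      = ∑ k, ∑ l, B k l * (if k = l then (if k = i0 then 2 * c1 else c1) else 0) := by
    rw [integral_finset_sum _ (fun k _ => integrable_finset_sum _ (fun l _ => hint k l))]
    refine Finset.sum_congr rfl fun k _ => ?_
    rw [integral_finset_sum _ (fun l _ => hint k l)]
    refine Finset.sum_congr rfl fun l _ => ?_
    rw [integral_const_mul, term_integral k l i0]
  have hdiag : ∀ k, (∑ l, B k l * (if k = l then (if k = i0 then 2 * c1 else c1) else 0))
      = B k k * (if k = i0 then 2 * c1 else c1) := by
    intro k
    rw [Finset.sum_eq_single k (fun l _ hlk => by rw [if_neg fun h => hlk h.symm, mul_zero])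
      (fun h => absurd (Finset.mem_univ k) h), if_pos rfl]
  have hcol : ∀ i j : Fin d, ∑ k, b k i * b k j = if i = j then 1 else 0 := by
    have hrow : (Matrix.of fun k i => b k i) * Matrix.transpose (Matrix.of fun k i => b k i) = 1 := by
      ext k l
      rw [Matrix.mul_apply, Matrix.one_apply]
      have horth := orthonormal_iff_ite.mp b.orthonormal k l
      rw [PiLp.inner_apply] at horth
      simpa [mul_comm] using horth
    have hco := mul_eq_one_comm.mp hrow
    intro i j
    have h2 := congrFun (congrFun hco i) j
    rw [Matrix.mul_apply, Matrix.one_apply] at h2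
    simpa using h2
  have htrace : ∑ k, B k k = A.trace := by
    simp only [hBdef]
    rw [Finset.sum_comm]
    have h1 : ∀ i : Fin d, ∑ k, ∑ j, b k i * (A i j * b k j)
        = ∑ j, A i j * ∑ k, b k i * b k j := by
      intro i
      rw [Finset.sum_comm]
      refine Finset.sum_congr rfl fun j _ => ?_
      rw [Finset.mul_sum]
      exact Finset.sum_congr rfl fun k _ => by ring
    simp only [h1, hcol]
    have h2 : ∀ i : Fin d, ∑ j, A i j * (if i = j then (1:ℝ) else 0) = A i i := by
      intro i
      rw [Finset.sum_eq_single i (fun j _ hji => by rw [if_neg fun h => hji h.symm, mul_zero])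
        (fun h => absurd (Finset.mem_univ i) h), if_pos rfl, mul_one]
    simp only [h2]
    rfl
  have hB00 : B i0 i0 = dotProduct (fun i => ν i) (A.mulVec fun i => ν i) := by
    simp only [hBdef, hb]
    simp only [dotProduct, Matrix.mulVec, Finset.mul_sum]
  rw [step1, ← step2, step4, step5, step6]
  calc ∑ k, ∑ l, B k l * (if k = l then (if k = i0 then 2 * c1 else c1) else 0)
      = ∑ k, B k k * (if k = i0 then 2 * c1 else c1) :=
        Finset.sum_congr rfl fun k _ => hdiag k
    _ = ∑ k, (c1 * B k k + (if k = i0 then c1 * B k k else 0)) := by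
        refine Finset.sum_congr rfl fun k _ => ?_
        by_cases h : k = i0 <;> simp [h] <;> ring
    _ = c1 * (∑ k, B k k) + c1 * B i0 i0 := by
        rw [Finset.sum_add_distrib, Finset.sum_ite_eq' Finset.univ i0
          (fun k => c1 * B k k), ← Finset.mul_sum]
        simp
    _ = (1 / Real.sqrt (2 * Real.pi)) *
          ((dotProduct (fun i => ν i) (A.mulVec fun i => ν i)) + A.trace) := by
        rw [htrace, hB00]
        simp only [c1, one_div]
        ring
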